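/- For every ε>0, the set S := { f : f = Σ_{i=1}^n λ_i m_i is a finite linear combination of ε-molecules m_i with ‖f‖_{H¹_{ε,mol}} ≥ (1/10) Σ_{i=1}^n |λ_i| } is dense in H¹_{ε,mol} for the H¹_{ε,mol}-norm. The same statement holds with H¹_{ε,mol} replaced by H¹_ato and ε-molecules replaced by atoms. -/

import Mathlib

/-!
Abstract Hardy spaces via atomic/molecular decompositions, after
"Abstract Hardy spaces" (Bernicot–Zhao style construction).

`(X, d, μ)` is a space of homogeneous type, `B = (B_Q)_Q` is a family of
`L²`-bounded linear operators indexed by balls (center `c`, radius `r`).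
-/

noncomputable section

/-- A linearization of `T`: a Banach space `E` and a bounded linear
`U : L² → L²(X, E)` with `|T f (x)| = ‖U f (x)‖` a.e. -/
structure AbstractHardy.Linearization {X : Type*} [MetricSpace X] [MeasurableSpace X]
    (μ : MeasureTheory.Measure X) (T : (X → ℝ) → X → ℝ) where
  E : Type
  [grp : NormedAddCommGroup E]
  [mod : NormedSpace ℝ E]
  [comp : CompleteSpace E]
  U : (X → ℝ) → X → E
  linear : IsLinearMap ℝ U
  bounded : ∃ C : ENNReal, C ≠ ⊤ ∧ ∀ f, MeasureTheory.MemLp f 2 μ →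
    MeasureTheory.eLpNorm (U f) 2 μ ≤ C * MeasureTheory.eLpNorm f 2 μ
  realizes : ∀ f, MeasureTheory.MemLp f 2 μ → ∀ᵐ x ∂μ, |T f x| = ‖U f x‖

open MeasureTheory Metric Filter ENNReal

namespace AbstractHardy

variable {X : Type*} [MetricSpace X] [MeasurableSpace X]

/-- The scaled corona `S_i(Q)` around the ball `Q = ball c r`:
`S_0(Q) = Q` and for `i ≥ 1`, `S_i(Q) = {x : 2^i ≤ 1 + d(x,c)/r < 2^(i+1)}`. -/
def corona (c : X) (r : ℝ) (i : ℕ) : Set X :=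
  if i = 0 then Metric.ball c r
  else {x | (2 : ℝ) ^ i ≤ 1 + dist x c / r ∧ 1 + dist x c / r < (2 : ℝ) ^ (i + 1)}

/-- The doubling property with constants `A`, `δ`:
`μ(B(x,tr)) ≤ A t^δ μ(B(x,r))` for every `t ≥ 1`. -/
def Doubling (μ : Measure X) (A δ : ℝ) : Prop :=
  ∀ (x : X) (r t : ℝ), 0 < r → 1 ≤ t →
    μ (Metric.ball x (t * r)) ≤ ENNReal.ofReal (A * t ^ δ) * μ (Metric.ball x r)

/-- The family `(B_Q)_Q` consists of linear operators. -/
def LinearFamily (B : X → ℝ → (X → ℝ) → X → ℝ) : Prop :=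
  ∀ (c : X) (r : ℝ), IsLinearMap ℝ (B c r)

/-- The family `(B_Q)_Q` is uniformly `L²`-bounded with constant `A'`. -/
def UniformBound (μ : Measure X) (B : X → ℝ → (X → ℝ) → X → ℝ) (A' : ℝ) : Prop :=
  ∀ (c : X) (r : ℝ) (f : X → ℝ), 0 < r → MemLp f 2 μ →
    eLpNorm (B c r f) 2 μ ≤ ENNReal.ofReal A' * eLpNorm f 2 μ

/-- `Bstar` is the family of adjoints of `B` for the real `L²` pairing
`⟨f, g⟩ = ∫ f g dμ`. -/
def IsAdjointFamily (μ : Measure X) (B Bstar : X → ℝ → (X → ℝ) → X → ℝ) : Prop :=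
  ∀ (c : X) (r : ℝ) (f g : X → ℝ), 0 < r → MemLp f 2 μ → MemLp g 2 μ →
    ∫ x, B c r f x * g x ∂μ = ∫ x, f x * Bstar c r g x ∂μ

/-- `Tstar` is the adjoint of `T` for the real `L²` pairing. -/
def IsAdjointOp (μ : Measure X) (T Tstar : (X → ℝ) → X → ℝ) : Prop :=
  ∀ (f g : X → ℝ), MemLp f 2 μ → MemLp g 2 μ →
    ∫ x, T f x * g x ∂μ = ∫ x, f x * Tstar g x ∂μ

/-- `((μ D)⁻¹ ∫_S |g|^p dμ)^{1/p}`, i.e. the `L^p(S)` norm normalized by `μ(D)^{-1/p}`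
(with the obvious `essSup` interpretation when `p = ∞`). -/
def scaledNorm (μ : Measure X) (p : ℝ≥0∞) (D S : Set X) (g : X → ℝ) : ℝ≥0∞ :=
  μ D ^ (-(p.toReal)⁻¹) * eLpNorm g p (μ.restrict S)

/-- An atom associated to some ball `Q = ball c r`: `m = B_Q f` with
`supp f ⊆ Q` and `‖f‖_{L²} ≤ μ(Q)^{-1/2}`. -/
def IsAtom (μ : Measure X) (B : X → ℝ → (X → ℝ) → X → ℝ) (m : X → ℝ) : Prop :=
  ∃ (c : X) (r : ℝ) (f : X → ℝ), 0 < r ∧ m = B c r f ∧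
    Function.support f ⊆ Metric.ball c r ∧
    eLpNorm f 2 μ ≤ μ (Metric.ball c r) ^ (-(1 : ℝ) / 2)

/-- An `ε`-molecule associated to some ball `Q = ball c r`: `m = B_Q f` with
`‖f‖_{L²(S_i(Q))} ≤ μ(2^i Q)^{-1/2} 2^{-ε i}` for all `i ≥ 0`. -/
def IsMolecule (μ : Measure X) (B : X → ℝ → (X → ℝ) → X → ℝ) (ε : ℝ) (m : X → ℝ) : Prop :=
  ∃ (c : X) (r : ℝ) (f : X → ℝ), 0 < r ∧ m = B c r f ∧
    ∀ i : ℕ, eLpNorm f 2 (μ.restrict (corona c r i)) ≤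
      μ (Metric.ball c ((2 : ℝ) ^ i * r)) ^ (-(1 : ℝ) / 2) *
        ENNReal.ofReal ((2 : ℝ) ^ (-(ε * (i : ℝ))))

/-- A decomposition `h = ∑ λ_i m_i` (μ-a.e.) with building blocks satisfying `P`
and `∑ |λ_i| < ∞`. -/
def IsDecomp (μ : Measure X) (P : (X → ℝ) → Prop) (h : X → ℝ)
    (lam : ℕ → ℝ) (m : ℕ → X → ℝ) : Prop :=
  (∀ i, P (m i)) ∧ Summable (fun i => |lam i|) ∧
    ∀ᵐ x ∂μ, HasSum (fun i => lam i * m i x) (h x)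

/-- Membership in the abstract Hardy space built from blocks satisfying `P`. -/
def MemHardy (μ : Measure X) (P : (X → ℝ) → Prop) (h : X → ℝ) : Prop :=
  ∃ lam m, IsDecomp μ P h lam m

/-- The Hardy norm: the infimum of `∑ |λ_i|` over all admissible decompositions. -/
def hardyNorm (μ : Measure X) (P : (X → ℝ) → Prop) (h : X → ℝ) : ℝ≥0∞ :=
  sInf {t : ℝ≥0∞ | ∃ lam m, IsDecomp μ P h lam m ∧ t = ENNReal.ofReal (∑' i, |lam i|)}

/-- Sublinearity (stated `μ`-a.e.). -/
def Sublinear (μ : Measure X) (T : (X → ℝ) → X → ℝ) : Prop :=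
  (∀ f g : X → ℝ, ∀ᵐ x ∂μ, |T (f + g) x| ≤ |T f x| + |T g x|) ∧
    ∀ (a : ℝ) (f : X → ℝ), ∀ᵐ x ∂μ, |T (a • f) x| = |a| * |T f x|

/-- The `L² → L²` operator (quasi-)norm of `T`. -/
def opNorm2 (μ : Measure X) (T : (X → ℝ) → X → ℝ) : ℝ≥0∞ :=
  sInf {C : ℝ≥0∞ | ∀ f, MemLp f 2 μ → eLpNorm (T f) 2 μ ≤ C * eLpNorm f 2 μ}

/-- The `H¹_ato → L¹` operator (quasi-)norm of `T`. -/
def opNormH1ato (μ : Measure X) (B : X → ℝ → (X → ℝ) → X → ℝ)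
    (T : (X → ℝ) → X → ℝ) : ℝ≥0∞ :=
  sInf {C : ℝ≥0∞ | ∀ f, MemLp f 2 μ → MemHardy μ (IsAtom μ B) f →
    eLpNorm (T f) 1 μ ≤ C * hardyNorm μ (IsAtom μ B) f}

/-- The Hardy–Littlewood maximal operator
`M_{HL,p}(f)(x) = sup_{Q ∋ x} ((μ Q)⁻¹ ∫_Q |f|^p)^{1/p}`. -/
def maxHL (μ : Measure X) (p : ℝ≥0∞) (f : X → ℝ) (x : X) : ℝ≥0∞ :=
  ⨆ (c : X) (r : ℝ) (_ : 0 < r) (_ : x ∈ Metric.ball c r),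
    scaledNorm μ p (Metric.ball c r) (Metric.ball c r) f

/-- The sharp maximal function
`M^♯_p(f)(x) = sup_{Q ∋ x} ((μ Q)⁻¹ ∫_Q |B_Q^* f|^p)^{1/p}`. -/
def sharpMax (μ : Measure X) (Bstar : X → ℝ → (X → ℝ) → X → ℝ) (p : ℝ≥0∞)
    (f : X → ℝ) (x : X) : ℝ≥0∞ :=
  ⨆ (c : X) (r : ℝ) (_ : 0 < r) (_ : x ∈ Metric.ball c r),
    scaledNorm μ p (Metric.ball c r) (Metric.ball c r) (Bstar c r f)

/-- The maximal operator `M_σ(f)(x) = sup_{Q ∋ x} ((μ Q)⁻¹ ∫_Q |A_Q^* f|^σ)^{1/σ}`,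
where `A_Q^* = Id - B_Q^*`. -/
def maxA (μ : Measure X) (Bstar : X → ℝ → (X → ℝ) → X → ℝ) (σ : ℝ≥0∞)
    (f : X → ℝ) (x : X) : ℝ≥0∞ :=
  ⨆ (c : X) (r : ℝ) (_ : 0 < r) (_ : x ∈ Metric.ball c r),
    scaledNorm μ σ (Metric.ball c r) (Metric.ball c r) (fun y => f y - Bstar c r f y)

/-- `T` is linearizable. -/
def Linearizable (μ : Measure X) (T : (X → ℝ) → X → ℝ) : Prop :=
  Nonempty (Linearization μ T)

open Classical in
/-- `1` if `μ(X) < ∞`, `0` otherwise. -/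
def finiteFlag (μ : Measure X) : ℝ≥0∞ := if μ Set.univ < ⊤ then 1 else 0

/-- Dual norm of `f` as a functional, through the `L²` pairing, on elements of
`L² ∩ H¹` of Hardy norm at most one. -/
def dualNorm (μ : Measure X) (P : (X → ℝ) → Prop) (f : X → ℝ) : ℝ≥0∞ :=
  ⨆ (h : X → ℝ) (_ : MemLp h 2 μ) (_ : MemHardy μ P h) (_ : hardyNorm μ P h ≤ 1),
    ENNReal.ofReal |∫ x, f x * h x ∂μ|

/-- The `BMO`-type norm `sup_Q ((μ Q)⁻¹ ∫_Q |B_Q^* f|²)^{1/2}`. -/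
def bmoNorm (μ : Measure X) (Bstar : X → ℝ → (X → ℝ) → X → ℝ) (f : X → ℝ) : ℝ≥0∞ :=
  ⨆ (c : X) (r : ℝ) (_ : 0 < r),
    scaledNorm μ 2 (Metric.ball c r) (Metric.ball c r) (Bstar c r f)

/-- The weighted measure `ω dμ`. -/
def weighted (μ : Measure X) (ω : X → ℝ) : Measure X :=
  μ.withDensity fun x => ENNReal.ofReal (ω x)

/-- The Muckenhoupt class `𝔸_p`. -/
def MuckenhouptAp (μ : Measure X) (ω : X → ℝ) (p : ℝ) : Prop :=
  ∃ C : ℝ≥0∞, C ≠ ⊤ ∧ ∀ (c : X) (r : ℝ), 0 < r →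
    ((μ (Metric.ball c r))⁻¹ * ∫⁻ x in Metric.ball c r, ENNReal.ofReal (ω x) ∂μ) *
      ((μ (Metric.ball c r))⁻¹ *
        ∫⁻ x in Metric.ball c r, ENNReal.ofReal (ω x) ^ (-(1 / (p - 1))) ∂μ) ^ (p - 1) ≤ C

/-- The reverse Hölder class `RH_q`. -/
def ReverseHolder (μ : Measure X) (ω : X → ℝ) (q : ℝ) : Prop :=
  ∃ C : ℝ≥0∞, C ≠ ⊤ ∧ ∀ (c : X) (r : ℝ), 0 < r →
    ((μ (Metric.ball c r))⁻¹ * ∫⁻ x in Metric.ball c r, ENNReal.ofReal (ω x) ^ q ∂μ) ^ (1 / q)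
      ≤ C * ((μ (Metric.ball c r))⁻¹ * ∫⁻ x in Metric.ball c r, ENNReal.ofReal (ω x) ∂μ)

/-- The conjugate exponent `a' = a/(a-1)` of a real exponent `a`. -/
def rconj (a : ℝ) : ℝ := a / (a - 1)

/-- `L^q` norm of an `ℝ≥0∞`-valued function (for finite `q`). -/
def lqNormE (μ : Measure X) (q : ℝ≥0∞) (g : X → ℝ≥0∞) : ℝ≥0∞ :=
  (∫⁻ x, g x ^ q.toReal ∂μ) ^ (q.toReal)⁻¹

/-- Weak `L^q` quasinorm `sup_t t · μ{g > t}^{1/q}` of an `ℝ≥0∞`-valued function. -/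
def weakLqNorm (μ : Measure X) (q : ℝ) (g : X → ℝ≥0∞) : ℝ≥0∞ :=
  ⨆ t : ℝ≥0∞, t * μ {x | t < g x} ^ q⁻¹

/-- Completeness of the abstract Hardy space built on blocks `P`: every Cauchy
sequence (for the Hardy norm) converges in Hardy norm to an element of the space. -/
def CompleteHardy (μ : Measure X) (P : (X → ℝ) → Prop) : Prop :=
  ∀ h : ℕ → X → ℝ, (∀ n, MemHardy μ P (h n)) →
    (∀ η : ℝ, 0 < η → ∃ N : ℕ, ∀ m n : ℕ, N ≤ m → N ≤ n →
      hardyNorm μ P (fun x => h m x - h n x) < ENNReal.ofReal η) →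
    ∃ g : X → ℝ, MemHardy μ P g ∧
      Filter.Tendsto (fun n => hardyNorm μ P (fun x => h n x - g x)) Filter.atTop (nhds 0)


section DenseAux

set_option maxHeartbeats 1000000
set_option linter.unusedSectionVars false

variable {X : Type*} [MetricSpace X] [MeasurableSpace X] {μ : Measure X}
  {P : (X → ℝ) → Prop}

private lemma hardyNorm_le_decomp {h : X → ℝ} {lam : ℕ → ℝ} {m : ℕ → X → ℝ}
    (hd : IsDecomp μ P h lam m) :
    hardyNorm μ P h ≤ ENNReal.ofReal (∑' i, |lam i|) :=
  sInf_le ⟨lam, m, hd, rfl⟩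

private lemma exists_decomp_lt {h : X → ℝ} {b : ℝ≥0∞} (hb : hardyNorm μ P h < b) :
    ∃ lam m, IsDecomp μ P h lam m ∧ ENNReal.ofReal (∑' i, |lam i|) < b := by
  obtain ⟨t, ht, htb⟩ := sInf_lt_iff.mp hb
  obtain ⟨lam, m, hd, rfl⟩ := ht
  exact ⟨lam, m, hd, htb⟩

/-- Interleaving of two sequences. -/
private def ileave {α : Type*} (u v : ℕ → α) : ℕ → α :=
  fun i => if Even i then u (i / 2) else v (i / 2)

private lemma ileave_even {α : Type*} (u v : ℕ → α) (k : ℕ) :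
    ileave u v (2 * k) = u k := by
  simp [ileave, Nat.mul_div_cancel_left k (by norm_num : 0 < 2)]

private lemma ileave_odd {α : Type*} (u v : ℕ → α) (k : ℕ) :
    ileave u v (2 * k + 1) = v k := by
  have h1 : ¬ Even (2 * k + 1) := by simp [Nat.even_add_one]
  have h2 : (2 * k + 1) / 2 = k := by omega
  simp [ileave, h1, h2]

private lemma isDecomp_add {u v : X → ℝ} {lu lv : ℕ → ℝ} {mu mv : ℕ → X → ℝ}
    (hu : IsDecomp μ P u lu mu) (hv : IsDecomp μ P v lv mv) :
    IsDecomp μ P (fun x => u x + v x) (ileave lu lv) (ileave mu mv) ∧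
      ∑' i, |ileave lu lv i| = (∑' i, |lu i|) + ∑' i, |lv i| := by
  have he : Summable fun k => |ileave lu lv (2 * k)| := by
    simpa [ileave_even] using hu.2.1
  have ho : Summable fun k => |ileave lu lv (2 * k + 1)| := by
    simpa [ileave_odd] using hv.2.1
  refine ⟨⟨?_, ?_, ?_⟩, ?_⟩
  · intro i
    rcases Nat.even_or_odd i with hi | hi
    · obtain ⟨k, hk⟩ := hi
      have : i = 2 * k := by omega
      rw [this, ileave_even]; exact hu.1 k
    · obtain ⟨k, hk⟩ := hi
      rw [hk, ileave_odd]; exact hv.1 k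
  · exact Summable.even_add_odd he ho
  · filter_upwards [hu.2.2, hv.2.2] with x hux hvx
    have he' : HasSum (fun k => ileave lu lv (2 * k) * ileave mu mv (2 * k) x) (u x) := by
      simpa [ileave_even] using hux
    have ho' : HasSum (fun k => ileave lu lv (2 * k + 1) * ileave mu mv (2 * k + 1) x) (v x) := by
      simpa [ileave_odd] using hvx
    exact HasSum.even_add_odd (f := fun i => ileave lu lv i * ileave mu mv i x) he' ho'
  · rw [← tsum_even_add_odd (f := fun i => |ileave lu lv i|) he ho]
    simp [ileave_even, ileave_odd]

private lemma isDecomp_tail {h : X → ℝ} {lam : ℕ → ℝ} {m : ℕ → X → ℝ}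
    (hd : IsDecomp μ P h lam m) (N : ℕ) :
    IsDecomp μ P (fun x => h x - ∑ i ∈ Finset.range N, lam i * m i x)
      (fun i => lam (i + N)) (fun i => m (i + N)) := by
  refine ⟨fun i => hd.1 _, (summable_nat_add_iff N).2 hd.2.1, ?_⟩
  filter_upwards [hd.2.2] with x hx
  exact (hasSum_nat_add_iff' (f := fun i => lam i * m i x) N).2 hx

private lemma key_induction (μ : Measure X) (P : (X → ℝ) → Prop) :
    ∀ (k : ℕ) (g : X → ℝ) (θ : ℝ), 0 < θ →
    hardyNorm μ P g < ENNReal.ofReal θ * 2 ^ k →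
    ∃ (n : ℕ) (lam : Fin n → ℝ) (m : Fin n → X → ℝ),
      (∀ i, P (m i)) ∧
      ENNReal.ofReal (∑ i, |lam i|) ≤
        10 * hardyNorm μ P (fun x => ∑ i, lam i * m i x) ∧
      hardyNorm μ P (fun x => g x - ∑ i, lam i * m i x) < ENNReal.ofReal θ := by
  intro k
  induction k with
  | zero =>
    intro g θ hθ hg
    refine ⟨0, fun i => i.elim0, fun i => i.elim0, fun i => i.elim0, by simp, ?_⟩
    simp only [Finset.univ_eq_empty, Finset.sum_empty, sub_zero]
    simpa using hg
  | succ k ih =>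
    intro g θ hθ hg
    set θ' : ℝ := θ / 2 with hθ'def
    have hθ' : 0 < θ' := by positivity
    obtain ⟨lam, m, hd, hsum⟩ := exists_decomp_lt hg
    -- choose a cutoff with small tail
    obtain ⟨N, hN⟩ := ((tendsto_sum_nat_add (fun i => |lam i|)).eventually_lt_const hθ').exists
    set F : X → ℝ := fun x => ∑ i ∈ Finset.range N, lam i * m i x with hFdef
    set L : ℝ := ∑ i ∈ Finset.range N, |lam i| with hLdef
    have eqFun : (fun x => ∑ i : Fin N, lam i.val * m i.val x) = F := by
      funext x
      exact Fin.sum_univ_eq_sum_range (fun j => lam j * m j x) N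
    have eqL : (∑ i : Fin N, |lam i.val|) = L :=
      Fin.sum_univ_eq_sum_range (fun j => |lam j|) N
    have htail : hardyNorm μ P (fun x => g x - F x) ≤
        ENNReal.ofReal (∑' i, |lam (i + N)|) :=
      hardyNorm_le_decomp (isDecomp_tail hd N)
    have htail' : hardyNorm μ P (fun x => g x - F x) < ENNReal.ofReal θ' :=
      lt_of_le_of_lt htail (ENNReal.ofReal_lt_ofReal_iff hθ' |>.2 hN)
    have e3 : (fun x => g x - ∑ i : Fin N, lam i.val * m i.val x) =
        (fun x => g x - F x) := by
      funext x
      rw [← eqFun]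
    by_cases hcase : ENNReal.ofReal (∑ i : Fin N, |lam i.val|) ≤
        10 * hardyNorm μ P (fun x => ∑ i : Fin N, lam i.val * m i.val x)
    · -- the finite part is already a good combination
      refine ⟨N, fun i => lam i.val, fun i => m i.val, fun i => hd.1 i.val, hcase, ?_⟩
      exact lt_of_eq_of_lt (congrArg (hardyNorm μ P) e3)
        (lt_of_lt_of_le htail' (ENNReal.ofReal_le_ofReal (by linarith)))
    · push_neg at hcase
      rw [eqL, eqFun] at hcase
      -- the finite part has small Hardy norm; recurse
      have hLle : ENNReal.ofReal L ≤ ENNReal.ofReal (∑' i, |lam i|) :=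
        ENNReal.ofReal_le_ofReal
          (hd.2.1.sum_le_tsum (Finset.range N) (fun i _ => abs_nonneg _))
      have hofθ : ENNReal.ofReal θ = 2 * ENNReal.ofReal θ' := by
        rw [show θ = 2 * θ' by rw [hθ'def]; ring, ENNReal.ofReal_mul (by norm_num)]
        norm_num
      have h10 : 10 * hardyNorm μ P F < 10 * (ENNReal.ofReal θ' * 2 ^ k) := by
        calc 10 * hardyNorm μ P F < ENNReal.ofReal L := hcase
          _ ≤ ENNReal.ofReal (∑' i, |lam i|) := hLle
          _ < ENNReal.ofReal θ * 2 ^ (k + 1) := hsum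
          _ ≤ 10 * (ENNReal.ofReal θ' * 2 ^ k) := by
              rw [hofθ, pow_succ]
              calc 2 * ENNReal.ofReal θ' * (2 ^ k * 2)
                  = ENNReal.ofReal θ' * 2 ^ k * 4 := by ring
                _ ≤ ENNReal.ofReal θ' * 2 ^ k * 10 := by gcongr <;> norm_num
                _ = 10 * (ENNReal.ofReal θ' * 2 ^ k) := by ring
      have hF : hardyNorm μ P F < ENNReal.ofReal θ' * 2 ^ k :=
        (ENNReal.mul_lt_mul_iff_right (by norm_num) (by norm_num)).mp h10
      obtain ⟨n, lamf, mf, hPf, hratio, happrox⟩ := ih F θ' hθ' hF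
      refine ⟨n, lamf, mf, hPf, hratio, ?_⟩
      -- combine the tail estimate with the recursive approximation
      obtain ⟨lv, mv, hdv, hv⟩ := exists_decomp_lt happrox
      have hdt := isDecomp_tail hd N
      obtain ⟨hdadd, hteq⟩ := isDecomp_add hdt hdv
      have hfun : (fun x => g x - ∑ i, lamf i * mf i x) =
          (fun x => (g x - F x) + ((F x - ∑ i, lamf i * mf i x))) := by
        funext x; ring
      refine lt_of_eq_of_lt (congrArg (hardyNorm μ P) hfun) ?_
      have hle := hardyNorm_le_decomp hdadd
      rw [hteq, ENNReal.ofReal_add (tsum_nonneg fun i => abs_nonneg _)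
        (tsum_nonneg fun i => abs_nonneg _)] at hle
      refine lt_of_le_of_lt hle ?_
      have h1 : ENNReal.ofReal (∑' i, |lam (i + N)|) < ENNReal.ofReal θ' :=
        (ENNReal.ofReal_lt_ofReal_iff hθ').2 hN
      calc ENNReal.ofReal (∑' i, |lam (i + N)|) + ENNReal.ofReal (∑' i, |lv i|)
          < ENNReal.ofReal θ' + ENNReal.ofReal θ' := ENNReal.add_lt_add h1 hv
        _ = ENNReal.ofReal θ := by
            rw [← ENNReal.ofReal_add (le_of_lt hθ') (le_of_lt hθ')]
            congr 1
            rw [hθ'def]; ring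

private lemma dense_aux (μ : Measure X) (P : (X → ℝ) → Prop) (h : X → ℝ)
    (hh : MemHardy μ P h) (η : ℝ) (hη : 0 < η) :
    ∃ (n : ℕ) (lam : Fin n → ℝ) (m : Fin n → X → ℝ),
      (∀ i, P (m i)) ∧
      ENNReal.ofReal (∑ i, |lam i|) ≤
        10 * hardyNorm μ P (fun x => ∑ i, lam i * m i x) ∧
      hardyNorm μ P (fun x => h x - ∑ i, lam i * m i x) < ENNReal.ofReal η := by
  obtain ⟨lam, m, hd⟩ := hh
  have hfin : hardyNorm μ P h < ⊤ :=
    lt_of_le_of_lt (hardyNorm_le_decomp hd) ENNReal.ofReal_lt_top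
  have hη' : ENNReal.ofReal η ≠ 0 := by
    simp [ENNReal.ofReal_eq_zero, not_le, hη]
  obtain ⟨r, hr⟩ := ENNReal.exists_nat_gt
    ((ENNReal.div_lt_top hfin.ne hη').ne : hardyNorm μ P h / ENNReal.ofReal η ≠ ⊤)
  have hr2 : hardyNorm μ P h / ENNReal.ofReal η < 2 ^ r := by
    refine lt_of_lt_of_le hr ?_
    calc (r : ℝ≥0∞) ≤ ((2 ^ r : ℕ) : ℝ≥0∞) := by
          exact_mod_cast (Nat.lt_two_pow_self (n := r)).le
      _ = 2 ^ r := by push_cast; ring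
  have hlt : hardyNorm μ P h < ENNReal.ofReal η * 2 ^ r := by
    rw [ENNReal.div_lt_iff (Or.inl hη') (Or.inl ENNReal.ofReal_ne_top)] at hr2
    rwa [mul_comm] at hr2
  exact key_induction μ P r h η hη hlt

end DenseAux

/-- Lemma `lemdense2` of the paper: the set `S` of finite combinations
`f = ∑_{i<n} λ_i m_i` of molecules (resp. atoms) with `‖f‖ ≥ (1/10) ∑ |λ_i|` is dense in
`H¹_{ε,mol}` (resp. in `H¹_ato`). -/
theorem statement3
    {X : Type*} [MetricSpace X] [MeasurableSpace X] [BorelSpace X]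
    (μ : Measure X) (A δ A' : ℝ) (hA : 0 < A) (hδ : 0 < δ) (hA' : 0 < A')
    (hμ : Doubling μ A δ)
    (B : X → ℝ → (X → ℝ) → X → ℝ)
    (hBlin : LinearFamily B) (hBbd : UniformBound μ B A')
 :
    (∀ ε : ℝ, 0 < ε → ∀ h : X → ℝ, MemHardy μ (IsMolecule μ B ε) h →
      ∀ η : ℝ, 0 < η → ∃ (n : ℕ) (lam : Fin n → ℝ) (m : Fin n → X → ℝ),
        (∀ i, IsMolecule μ B ε (m i)) ∧
        ENNReal.ofReal (∑ i, |lam i|) ≤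
          10 * hardyNorm μ (IsMolecule μ B ε) (fun x => ∑ i, lam i * m i x) ∧
        hardyNorm μ (IsMolecule μ B ε) (fun x => h x - ∑ i, lam i * m i x) <
          ENNReal.ofReal η) ∧
    (∀ h : X → ℝ, MemHardy μ (IsAtom μ B) h →
      ∀ η : ℝ, 0 < η → ∃ (n : ℕ) (lam : Fin n → ℝ) (m : Fin n → X → ℝ),
        (∀ i, IsAtom μ B (m i)) ∧
        ENNReal.ofReal (∑ i, |lam i|) ≤
          10 * hardyNorm μ (IsAtom μ B) (fun x => ∑ i, lam i * m i x) ∧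
        hardyNorm μ (IsAtom μ B) (fun x => h x - ∑ i, lam i * m i x) <
          ENNReal.ofReal η) := by
  exact ⟨fun ε _ h hh η hη => dense_aux μ _ h hh η hη,
    fun h hh η hη => dense_aux μ _ h hh η hη⟩




end AbstractHardy
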